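/- arXiv:2403.17273 — 7 statements merged into one kernel-verified Lean document; each statement's English description precedes it below -/
import Mathlib

section
/- For any real K ≠ 0, setting s = sign(K), W = (1/2)·arccos(e^{-2|K|}), and A = e^{|K|}/2, one has for all z₁, z₂ ∈ {−1, +1}: e^{−K z₁ z₂} = A · Σ_{h ∈ {−1,+1}} e^{−i W (z₁ + s z₂) h} = 2A · cos(W(z₁ + s z₂)). In particular the non-unitary two-body exponential is an equal-weight sum of two unitary phases. -/
open Real Complex

lemma rbm_real (K : ℝ) (hK : K ≠ 0)
    (s W A : ℝ) (hs : s = Real.sign K)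
    (hW : W = Real.arccos (Real.exp (-2 * |K|)) / 2)
    (hA : A = Real.exp |K| / 2)
    (z₁ z₂ : ℝ) (hz₁ : z₁ = -1 ∨ z₁ = 1) (hz₂ : z₂ = -1 ∨ z₂ = 1) :
    Real.exp (-K * z₁ * z₂) = 2 * A * Real.cos (W * (z₁ + s * z₂)) := by
  have hle : Real.exp (-2 * |K|) ≤ 1 := by
    apply Real.exp_le_one_iff.mpr; nlinarith [abs_nonneg K]
  have hge : -1 ≤ Real.exp (-2 * |K|) := by
    nlinarith [Real.exp_pos (-2 * |K|)]
  have hcos2W : Real.cos (2 * W) = Real.exp (-2 * |K|) := by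
    rw [hW, show 2 * (Real.arccos (Real.exp (-2 * |K|)) / 2)
        = Real.arccos (Real.exp (-2 * |K|)) by ring,
      Real.cos_arccos hge hle]
  have key : ∀ x : ℝ, (x = 0 → Real.exp |K| = 2 * A * Real.cos (W * x)) ∧
      ((x = 2 ∨ x = -2) → Real.exp (-|K|) = 2 * A * Real.cos (W * x)) := by
    intro x
    constructor
    · rintro rfl; rw [hA, mul_zero, Real.cos_zero]; ring
    · rintro (rfl | rfl)
      · rw [show W * 2 = 2 * W by ring, hcos2W, hA,
          show 2 * (Real.exp |K| / 2) * Real.exp (-2 * |K|)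
            = Real.exp |K| * Real.exp (-2 * |K|) by ring, ← Real.exp_add]
        congr 1; ring
      · rw [show W * (-2) = -(2 * W) by ring, Real.cos_neg, hcos2W, hA,
          show 2 * (Real.exp |K| / 2) * Real.exp (-2 * |K|)
            = Real.exp |K| * Real.exp (-2 * |K|) by ring, ← Real.exp_add]
        congr 1; ring
  rcases hK.lt_or_gt with h | h
  · have hs' : s = -1 := by rw [hs, Real.sign_of_neg h]
    have habs : |K| = -K := abs_of_neg h
    rcases hz₁ with h1 | h1 <;> rcases hz₂ with h2 | h2 <;> subst h1 h2 hs'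
    · have e := (key 0).1 rfl
      rw [show (-1 : ℝ) + -1 * -1 = 0 by norm_num,
        show -K * (-1) * (-1) = |K| by rw [habs]; ring, e]
    · have e := (key (-2)).2 (Or.inr rfl)
      rw [show (-1 : ℝ) + -1 * 1 = -2 by norm_num,
        show -K * (-1) * 1 = -|K| by rw [habs]; ring, e]
    · have e := (key 2).2 (Or.inl rfl)
      rw [show (1 : ℝ) + -1 * -1 = 2 by norm_num,
        show -K * 1 * (-1) = -|K| by rw [habs]; ring, e]
    · have e := (key 0).1 rfl
      rw [show (1 : ℝ) + -1 * 1 = 0 by norm_num,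
        show -K * 1 * 1 = |K| by rw [habs]; ring, e]
  · have hs' : s = 1 := by rw [hs, Real.sign_of_pos h]
    have habs : |K| = K := abs_of_pos h
    rcases hz₁ with h1 | h1 <;> rcases hz₂ with h2 | h2 <;> subst h1 h2 hs'
    · have e := (key (-2)).2 (Or.inr rfl)
      rw [show (-1 : ℝ) + 1 * -1 = -2 by norm_num,
        show -K * (-1) * (-1) = -|K| by rw [habs]; ring, e]
    · have e := (key 0).1 rfl
      rw [show (-1 : ℝ) + 1 * 1 = 0 by norm_num,
        show -K * (-1) * 1 = |K| by rw [habs]; ring, e]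
    · have e := (key 0).1 rfl
      rw [show (1 : ℝ) + 1 * -1 = 0 by norm_num,
        show -K * 1 * (-1) = |K| by rw [habs]; ring, e]
    · have e := (key 2).2 (Or.inl rfl)
      rw [show (1 : ℝ) + 1 * 1 = 2 by norm_num,
        show -K * 1 * 1 = -|K| by rw [habs]; ring, e]

lemma rbm_sum (W : ℝ) (X : ℂ) :
    ∑ h ∈ ({-1, 1} : Finset ℝ), Complex.exp (-Complex.I * W * X * h)
      = 2 * Complex.cos ((W : ℂ) * X) := by
  rw [Finset.sum_pair (by norm_num : (-1 : ℝ) ≠ 1)]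
  push_cast
  rw [Complex.cos, show -Complex.I * W * X * (-1) = W * X * Complex.I by ring,
    show -Complex.I * W * X * 1 = -(W * X) * Complex.I by ring]
  ring

/-- Scalar two-body RBM auxiliary-field identity: for `K ≠ 0`, with
`s = sign K`, `W = arccos (exp (-2|K|)) / 2`, `A = exp |K| / 2`, and
`z₁, z₂ ∈ {-1, 1}`, the non-unitary exponential `exp (-K z₁ z₂)` equals the
equal-weight sum over `h ∈ {-1, 1}` of the unitary phases
`A · exp (-i W (z₁ + s z₂) h)`, which in turn equals `2 A cos (W (z₁ + s z₂))`. -/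
theorem rbm_two_body_identity (K : ℝ) (hK : K ≠ 0)
    (s W A : ℝ) (hs : s = Real.sign K)
    (hW : W = Real.arccos (Real.exp (-2 * |K|)) / 2)
    (hA : A = Real.exp |K| / 2)
    (z₁ z₂ : ℝ) (hz₁ : z₁ = -1 ∨ z₁ = 1) (hz₂ : z₂ = -1 ∨ z₂ = 1) :
    Complex.exp (-(K : ℂ) * z₁ * z₂) =
      (A : ℂ) * ∑ h ∈ ({-1, 1} : Finset ℝ),
        Complex.exp (-Complex.I * W * ((z₁ : ℂ) + s * z₂) * h) ∧
    Complex.exp (-(K : ℂ) * z₁ * z₂) =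
      2 * (A : ℂ) * Complex.cos ((W : ℂ) * ((z₁ : ℂ) + s * z₂)) := by
  have hreal := rbm_real K hK s W A hs hW hA z₁ z₂ hz₁ hz₂
  have h2 : Complex.exp (-(K : ℂ) * z₁ * z₂) =
      2 * (A : ℂ) * Complex.cos ((W : ℂ) * ((z₁ : ℂ) + s * z₂)) := by
    rw [show -(K : ℂ) * z₁ * z₂ = ((-K * z₁ * z₂ : ℝ) : ℂ) by push_cast; ring,
      ← Complex.ofReal_exp, hreal]
    push_cast [Complex.ofReal_cos]
    ring
  exact ⟨by rw [h2, rbm_sum]; ring, h2⟩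
end

section
/- For any real K ≠ 0, setting s = sign(K), W = (1/2)·arccos(e^{−2|K|}), and A = e^{|K|}/2, one has for all z ∈ {−1, +1}: e^{−K z} = A · Σ_{h ∈ {−1,+1}} e^{−i W (z + s) h} = 2A · cos(W(z + s)). -/
open Real Complex

lemma mul_exp (a b : ℝ) : 2 * (Real.exp a / 2) * Real.exp b = Real.exp (a + b) := by
  rw [show 2 * (Real.exp a / 2) * Real.exp b = Real.exp a * Real.exp b by ring, ← Real.exp_add]

lemma key_real (K : ℝ) (hK : K ≠ 0) (s W A : ℝ) (hs : s = Real.sign K)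
    (hW : W = Real.arccos (Real.exp (-2 * |K|)) / 2)
    (hA : A = Real.exp |K| / 2)
    (z : ℝ) (hz : z = -1 ∨ z = 1) :
    Real.exp (-(K * z)) = 2 * A * Real.cos (W * (z + s)) := by
  have hx1 : Real.exp (-2 * |K|) ≤ 1 := by
    rw [show (1:ℝ) = Real.exp 0 by simp]
    exact Real.exp_le_exp.2 (by nlinarith [abs_nonneg K])
  have hx0 : (-1:ℝ) ≤ Real.exp (-2 * |K|) := le_trans (by norm_num) (Real.exp_pos _).le
  have hcos : Real.cos (2 * W) = Real.exp (-2 * |K|) := by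
    rw [hW, show 2 * (Real.arccos (Real.exp (-2 * |K|)) / 2) = Real.arccos (Real.exp (-2*|K|)) by ring]
    exact Real.cos_arccos hx0 hx1
  rcases hK.lt_or_gt with h | h
  · have hs' : s = -1 := by rw [hs, Real.sign_of_neg h]
    have habs : |K| = -K := abs_of_neg h
    rcases hz with rfl | rfl
    · -- z = -1, s = -1 : z+s = -2
      rw [hs', hA, habs, show W * (-1 + -1) = -(2*W) by ring, Real.cos_neg, hcos, habs,
        mul_exp]; ring_nf
    · rw [hs', hA, habs, show W * (1 + -1) = 0 by ring, Real.cos_zero]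
      ring_nf
  · have hs' : s = 1 := by rw [hs, Real.sign_of_pos h]
    have habs : |K| = K := abs_of_pos h
    rcases hz with rfl | rfl
    · rw [hs', hA, habs, show W * (-1 + 1) = 0 by ring, Real.cos_zero]
      ring_nf
    · rw [hs', hA, habs, show W * (1 + 1) = 2*W by ring, hcos, habs, mul_exp]; ring_nf

/-- Scalar one-body RBM auxiliary-field identity: for `K ≠ 0`, with
`s = sign K`, `W = arccos (exp (-2|K|)) / 2`, `A = exp |K| / 2`, and
`z ∈ {-1, 1}`: `exp (-K z) = A Σ_{h=±1} exp (-i W (z + s) h) = 2A cos (W (z + s))`. -/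
theorem rbm_one_body_identity (K : ℝ) (hK : K ≠ 0)
    (s W A : ℝ) (hs : s = Real.sign K)
    (hW : W = Real.arccos (Real.exp (-2 * |K|)) / 2)
    (hA : A = Real.exp |K| / 2)
    (z : ℝ) (hz : z = -1 ∨ z = 1) :
    Complex.exp (-(K : ℂ) * z) =
      (A : ℂ) * ∑ h ∈ ({-1, 1} : Finset ℝ),
        Complex.exp (-Complex.I * W * ((z : ℂ) + s) * h) ∧
    Complex.exp (-(K : ℂ) * z) =
      2 * (A : ℂ) * Complex.cos ((W : ℂ) * ((z : ℂ) + s)) := by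
  have hr := key_real K hK s W A hs hW hA z hz
  have h2 : Complex.exp (-(K : ℂ) * z) =
      2 * (A : ℂ) * Complex.cos ((W : ℂ) * ((z : ℂ) + s)) := by
    have := congrArg (Complex.ofReal) hr
    push_cast at this
    rw [neg_mul]
    exact this
  refine ⟨?_, h2⟩
  rw [h2, Finset.sum_pair (by norm_num : (-1:ℝ) ≠ 1)]
  rw [Complex.cos]
  push_cast
  ring_nf
end

section
/- Let K > 0, W = (1/2)·arctan((1 − e^{−8K})^{1/4}), A = (1/2)·(sec⁴(2W)·sec(4W))^{1/8}, and K₂ = −(1/8)·log(cos(4W)). Then for all z₁, z₂, z₃, z₄ ∈ {−1,+1}: exp[−(K z₁z₂z₃z₄ + K₂(z₁z₂ + z₁z₃ + z₂z₃ + z₁z₄ + z₂z₄ + z₃z₄))] = A · Σ_{h ∈ {−1,+1}} e^{−i(W(z₁+z₂+z₃) + W z₄)h}. -/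
open Real Complex

private lemma rbm_master (A W a x : ℝ) (θ L : ℂ)
    (hθ : θ = ((x : ℝ) : ℂ)) (hL : L = ((a : ℝ) : ℂ))
    (h : Real.exp a = 2 * A * Real.cos x) :
    Complex.exp L = (A : ℂ) *
      (Complex.exp (-Complex.I * θ * (((-1 : ℝ)) : ℂ)) +
       Complex.exp (-Complex.I * θ * (((1 : ℝ)) : ℂ))) := by
  subst hθ hL
  rw [show -Complex.I * ((x : ℝ) : ℂ) * (((-1 : ℝ)) : ℂ) = ((x : ℝ) : ℂ) * Complex.I by
        push_cast; ring,
      show -Complex.I * ((x : ℝ) : ℂ) * (((1 : ℝ)) : ℂ) = (((-x : ℝ)) : ℂ) * Complex.I by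
        push_cast; ring,
      Complex.exp_mul_I, Complex.exp_mul_I, ← Complex.ofReal_exp, h]
  push_cast
  rw [Complex.cos_neg, Complex.sin_neg]
  ring

/-- Scalar four-body RBM identity (case `sign K = +1`): with
`W = arctan ((1 - exp (-8K))^(1/4)) / 2`,
`A = (sec⁴(2W) sec(4W))^(1/8) / 2`, and induced two-body coupling
`K₂ = -(1/8) log (cos (4W))`, for all `z₁, z₂, z₃, z₄ ∈ {-1, 1}`:
`exp (-(K z₁z₂z₃z₄ + K₂(z₁z₂+z₁z₃+z₂z₃+z₁z₄+z₂z₄+z₃z₄)))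
  = A Σ_{h=±1} exp (-i (W(z₁+z₂+z₃) + W z₄) h)`. -/
theorem rbm_four_body_identity (K : ℝ) (hK : 0 < K)
    (W A K₂ : ℝ)
    (hW : W = Real.arctan ((1 - Real.exp (-8 * K)) ^ ((1 : ℝ) / 4)) / 2)
    (hA : A = ((1 / Real.cos (2 * W)) ^ (4 : ℕ) * (1 / Real.cos (4 * W))) ^ ((1 : ℝ) / 8) / 2)
    (hK₂ : K₂ = -(1 / 8) * Real.log (Real.cos (4 * W)))
    (z₁ z₂ z₃ z₄ : ℝ) (hz₁ : z₁ = -1 ∨ z₁ = 1) (hz₂ : z₂ = -1 ∨ z₂ = 1)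
    (hz₃ : z₃ = -1 ∨ z₃ = 1) (hz₄ : z₄ = -1 ∨ z₄ = 1) :
    Complex.exp (-((K : ℂ) * z₁ * z₂ * z₃ * z₄ +
        (K₂ : ℂ) * (z₁ * z₂ + z₁ * z₃ + z₂ * z₃ + z₁ * z₄ + z₂ * z₄ + z₃ * z₄))) =
      (A : ℂ) * ∑ h ∈ ({-1, 1} : Finset ℝ),
        Complex.exp (-Complex.I * ((W : ℂ) * ((z₁ : ℂ) + z₂ + z₃) + (W : ℂ) * z₄) * h) := by
  -- real preliminaries
  set t : ℝ := (1 - Real.exp (-8 * K)) ^ ((1 : ℝ) / 4) with ht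
  have hEpos : 0 < Real.exp (-8 * K) := Real.exp_pos _
  have hE1 : Real.exp (-8 * K) < 1 := by
    have : Real.exp (-8 * K) < Real.exp 0 := Real.exp_lt_exp.mpr (by linarith)
    simpa using this
  have h1 : 0 < 1 - Real.exp (-8 * K) := by linarith
  have h2 : 1 - Real.exp (-8 * K) < 1 := by linarith
  have ht0 : 0 < t := Real.rpow_pos_of_pos h1 _
  have ht1 : t < 1 := Real.rpow_lt_one h1.le h2 (by norm_num)
  have h2W : 2 * W = Real.arctan t := by rw [hW]; ring
  have h1t : (0:ℝ) < 1 + t ^ 2 := by positivity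
  have hc2sq : Real.cos (2 * W) ^ 2 = 1 / (1 + t ^ 2) := by
    rw [h2W, Real.cos_sq_arctan]
  have hc2pos : 0 < Real.cos (2 * W) := by
    rw [h2W, Real.cos_arctan]; positivity
  have hc4 : Real.cos (4 * W) = (1 - t ^ 2) / (1 + t ^ 2) := by
    rw [show (4:ℝ) * W = 2 * (2 * W) by ring, Real.cos_two_mul, hc2sq]
    field_simp
    ring
  have hc4pos : 0 < Real.cos (4 * W) := by
    rw [hc4]; exact div_pos (by nlinarith) h1t
  have ht4 : t ^ (4 : ℕ) = 1 - Real.exp (-8 * K) := by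
    rw [ht, ← Real.rpow_natCast ((1 - Real.exp (-8 * K)) ^ ((1:ℝ)/4)) 4,
        ← Real.rpow_mul h1.le]
    norm_num
  have hkey : Real.exp (-8 * K) = Real.cos (4 * W) / Real.cos (2 * W) ^ 4 := by
    have he : Real.exp (-8 * K) = 1 - t ^ 4 := by linarith [ht4]
    rw [he, hc4, show Real.cos (2 * W) ^ 4 = (Real.cos (2 * W) ^ 2) ^ 2 by ring, hc2sq]
    field_simp
    ring
  set L2 : ℝ := Real.log (Real.cos (2 * W)) with hL2
  set L4 : ℝ := Real.log (Real.cos (4 * W)) with hL4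
  have hexp2 : Real.exp L2 = Real.cos (2 * W) := Real.exp_log hc2pos
  have hexp4 : Real.exp L4 = Real.cos (4 * W) := Real.exp_log hc4pos
  have hKlog : -8 * K = L4 - 4 * L2 := by
    have h := congrArg Real.log hkey
    rw [Real.log_exp, Real.log_div hc4pos.ne' (pow_ne_zero 4 hc2pos.ne'),
        Real.log_pow] at h
    push_cast at h
    linarith
  have hK2' : K₂ = -(1 / 8) * L4 := hK₂
  have hA' : A = Real.exp ((-(4 * L2) - L4) * (1 / 8)) / 2 := by
    have hbase : (1 / Real.cos (2 * W)) ^ (4 : ℕ) * (1 / Real.cos (4 * W)) =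
        Real.exp (-(4 * L2) - L4) := by
      rw [← hexp2, ← hexp4, one_div, one_div, ← Real.exp_neg, ← Real.exp_neg,
          ← Real.exp_nat_mul, ← Real.exp_add]
      norm_num
      ring_nf
    rw [hA, hbase, Real.rpow_def_of_pos (Real.exp_pos _), Real.log_exp]
  have F4 : Real.exp (-(K + 6 * K₂)) = 2 * A * Real.cos (4 * W) := by
    rw [hA', ← hexp4,
        show 2 * (Real.exp ((-(4 * L2) - L4) * (1 / 8)) / 2) * Real.exp L4 =
          Real.exp ((-(4 * L2) - L4) * (1 / 8) + L4) by rw [Real.exp_add]; ring,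
        Real.exp_eq_exp, hK2']
    linarith
  have F2 : Real.exp K = 2 * A * Real.cos (2 * W) := by
    rw [hA', ← hexp2,
        show 2 * (Real.exp ((-(4 * L2) - L4) * (1 / 8)) / 2) * Real.exp L2 =
          Real.exp ((-(4 * L2) - L4) * (1 / 8) + L2) by rw [Real.exp_add]; ring,
        Real.exp_eq_exp]
    linarith
  have F0 : Real.exp (-K + 2 * K₂) = 2 * A := by
    rw [hA',
        show 2 * (Real.exp ((-(4 * L2) - L4) * (1 / 8)) / 2) =
          Real.exp ((-(4 * L2) - L4) * (1 / 8)) by ring,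
        Real.exp_eq_exp, hK2']
    linarith
  have F4' : Real.exp (-(K + 6 * K₂)) = 2 * A * Real.cos (-(4 * W)) := by
    rw [Real.cos_neg]; exact F4
  have F2' : Real.exp K = 2 * A * Real.cos (-(2 * W)) := by
    rw [Real.cos_neg]; exact F2
  have F0' : Real.exp (-K + 2 * K₂) = 2 * A * Real.cos 0 := by
    rw [Real.cos_zero]; linarith [F0]
  have hne : ((-1 : ℝ)) ≠ (1 : ℝ) := by norm_num
  rcases hz₁ with rfl | rfl <;> rcases hz₂ with rfl | rfl <;>
    rcases hz₃ with rfl | rfl <;> rcases hz₄ with rfl | rfl <;>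
    rw [Finset.sum_pair hne]
  · exact rbm_master A W (-(K + 6 * K₂)) (-(4 * W)) _ _ (by push_cast; ring) (by push_cast; ring) F4'
  · exact rbm_master A W K (-(2 * W)) _ _ (by push_cast; ring) (by push_cast; ring) F2'
  · exact rbm_master A W K (-(2 * W)) _ _ (by push_cast; ring) (by push_cast; ring) F2'
  · exact rbm_master A W (-K + 2 * K₂) 0 _ _ (by push_cast; ring) (by push_cast; ring) F0'
  · exact rbm_master A W K (-(2 * W)) _ _ (by push_cast; ring) (by push_cast; ring) F2'
  · exact rbm_master A W (-K + 2 * K₂) 0 _ _ (by push_cast; ring) (by push_cast; ring) F0'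
  · exact rbm_master A W (-K + 2 * K₂) 0 _ _ (by push_cast; ring) (by push_cast; ring) F0'
  · exact rbm_master A W K (2 * W) _ _ (by push_cast; ring) (by push_cast; ring) F2
  · exact rbm_master A W K (-(2 * W)) _ _ (by push_cast; ring) (by push_cast; ring) F2'
  · exact rbm_master A W (-K + 2 * K₂) 0 _ _ (by push_cast; ring) (by push_cast; ring) F0'
  · exact rbm_master A W (-K + 2 * K₂) 0 _ _ (by push_cast; ring) (by push_cast; ring) F0'
  · exact rbm_master A W K (2 * W) _ _ (by push_cast; ring) (by push_cast; ring) F2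
  · exact rbm_master A W (-K + 2 * K₂) 0 _ _ (by push_cast; ring) (by push_cast; ring) F0'
  · exact rbm_master A W K (2 * W) _ _ (by push_cast; ring) (by push_cast; ring) F2
  · exact rbm_master A W K (2 * W) _ _ (by push_cast; ring) (by push_cast; ring) F2
  · exact rbm_master A W (-(K + 6 * K₂)) (4 * W) _ _ (by push_cast; ring) (by push_cast; ring) F4
end

section
/- Let M ≥ 2 be even and define F : [0, π/(2M)) → ℝ by F(W) = 2^{−M} Σ_{k=0}^{M} (−1)^k C(M,k) log(2·cos((2k−M)W)), where C(M,k) is the binomial coefficient. Then F is continuous on [0, π/(2M)), F(0) = 0, F(W) → −∞ as W → π/(2M)⁻, and consequently F is surjective onto an interval containing (−∞, 0]. -/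
open Real Filter

private lemma rbm_cos_pos (M : ℕ) (hM1 : 1 ≤ M) {b W : ℝ} (hb : |b| ≤ M)
    (hW0 : 0 ≤ W) (hW : W < π / (2 * M)) : 0 < Real.cos (b * W) := by
  have hM0 : (0:ℝ) < M := by exact_mod_cast hM1
  apply Real.cos_pos_of_mem_Ioo
  have h1 : |b * W| ≤ (M : ℝ) * W := by
    rw [abs_mul, abs_of_nonneg hW0]
    exact mul_le_mul_of_nonneg_right hb hW0
  have h2 : (M : ℝ) * W < π / 2 := by
    have := (lt_div_iff₀ (by positivity : (0:ℝ) < 2 * M)).mp hW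
    nlinarith
  have := abs_lt.mp (lt_of_le_of_lt h1 h2)
  constructor <;> linarith [this.1, this.2]

private lemma rbm_abs_coef_le (M k : ℕ) (hk : k ≤ M) : |(2 * (k:ℝ) - M)| ≤ M := by
  have hk' : (k:ℝ) ≤ M := by exact_mod_cast hk
  have hk0 : (0:ℝ) ≤ k := Nat.cast_nonneg k
  rw [abs_le]
  constructor <;> nlinarith

/-- Solvability of the highest-order RBM coupling: for even `M ≥ 2`, the
function `F W = 2^{-M} Σ_{k=0}^{M} (-1)^k C(M,k) log (2 cos ((2k - M) W))`
is continuous on `[0, π/(2M))`, vanishes at `0`, tends to `-∞` as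
`W → π/(2M)⁻`, and its image contains `(-∞, 0]`. -/
theorem rbm_highest_coupling_solvable (M : ℕ) (hM : 2 ≤ M) (hMe : Even M)
    (F : ℝ → ℝ)
    (hF : ∀ W : ℝ, F W = (1 / 2 ^ M) *
      ∑ k ∈ Finset.range (M + 1),
        (-1 : ℝ) ^ k * (M.choose k : ℝ) *
          Real.log (2 * Real.cos (((2 * k : ℝ) - M) * W))) :
    ContinuousOn F (Set.Ico 0 (π / (2 * M))) ∧
    F 0 = 0 ∧
    Tendsto F (nhdsWithin (π / (2 * M)) (Set.Ico 0 (π / (2 * M)))) atBot ∧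
    Set.Iic (0 : ℝ) ⊆ F '' Set.Ico 0 (π / (2 * M)) := by
  have hM1 : 1 ≤ M := le_trans (by norm_num) hM
  have hM0 : (0:ℝ) < M := by exact_mod_cast hM1
  have hπ : 0 < π := Real.pi_pos
  set a : ℝ := π / (2 * M) with ha_def
  have ha : 0 < a := by positivity
  -- positivity of each cosine on the set
  have hcosk : ∀ k ≤ M, ∀ W ∈ Set.Ico (0:ℝ) a, 0 < Real.cos (((2 * k : ℝ) - M) * W) := by
    intro k hk W hW
    exact rbm_cos_pos M hM1 (rbm_abs_coef_le M k hk) hW.1 hW.2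
  -- continuity
  have hcont : ContinuousOn F (Set.Ico 0 a) := by
    have hg : ContinuousOn (fun W : ℝ => (1 / 2 ^ M : ℝ) *
        ∑ k ∈ Finset.range (M + 1),
          (-1 : ℝ) ^ k * (M.choose k : ℝ) *
            Real.log (2 * Real.cos (((2 * k : ℝ) - M) * W))) (Set.Ico 0 a) := by
      apply ContinuousOn.mul continuousOn_const
      apply continuousOn_finset_sum
      intro k hk
      apply ContinuousOn.mul continuousOn_const
      apply ContinuousOn.log
      · exact (continuous_const.mul (Real.continuous_cos.comp
          (continuous_const.mul continuous_id))).continuousOn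
      · intro W hW
        have := hcosk k (Nat.lt_succ_iff.mp (Finset.mem_range.mp hk)) W hW
        positivity
    exact hg.congr fun W _ => hF W
  -- value at 0
  have hzero : F 0 = 0 := by
    have hz : (∑ k ∈ Finset.range (M+1), (-1:ℤ)^k * (M.choose k : ℤ)) = 0 := by
      rw [Int.alternating_sum_range_choose, if_neg (by omega)]
    have hzR : (∑ k ∈ Finset.range (M+1), (-1:ℝ)^k * (M.choose k : ℝ)) = 0 := by
      exact_mod_cast congrArg (Int.cast : ℤ → ℝ) hz
    rw [hF 0]
    simp only [mul_zero, Real.cos_zero, mul_one]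
    rw [← Finset.sum_mul, hzR, zero_mul, mul_zero]
  -- tendsto atBot
  set l := nhdsWithin a (Set.Ico 0 a) with hl_def
  have hmem : ∀ᶠ W in l, W ∈ Set.Ico (0:ℝ) a := eventually_mem_nhdsWithin
  have hMa : (M : ℝ) * a = π / 2 := by
    field_simp [ha_def]
    rw [ha_def]; field_simp
  have htend : Tendsto F l atBot := by
    rw [funext hF]
    apply Tendsto.const_mul_atBot (by positivity : (0:ℝ) < 1 / 2 ^ M)
    -- split the sum
    have hsplit : ∀ W : ℝ,
        (∑ k ∈ Finset.range (M + 1),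
          (-1 : ℝ) ^ k * (M.choose k : ℝ) *
            Real.log (2 * Real.cos (((2 * k : ℝ) - M) * W)))
        = (∑ k ∈ Finset.Ioo 0 M,
            (-1 : ℝ) ^ k * (M.choose k : ℝ) *
              Real.log (2 * Real.cos (((2 * k : ℝ) - M) * W)))
          + 2 * Real.log (2 * Real.cos (M * W)) := by
      intro W
      have hset : Finset.range (M + 1) = insert 0 (insert M (Finset.Ioo 0 M)) := by
        ext x
        simp only [Finset.mem_range, Finset.mem_insert, Finset.mem_Ioo]
        omega
      rw [hset, Finset.sum_insert (by simp; omega), Finset.sum_insert (by simp)]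
      have h0 : ((2 * (0:ℕ) : ℝ) - M) = -(M : ℝ) := by push_cast; ring
      have hMc : ((2 * (M:ℕ) : ℝ) - M) = (M : ℝ) := by ring
      rw [h0, hMc, neg_mul, Real.cos_neg, hMe.neg_one_pow]
      simp [Nat.choose_self]
      ring
    simp only [hsplit]
    refine Filter.Tendsto.add_atBot (C := ∑ k ∈ Finset.Ioo 0 M,
      (-1 : ℝ) ^ k * (M.choose k : ℝ) *
        Real.log (2 * Real.cos (((2 * k : ℝ) - M) * a))) ?_ ?_
    · -- middle sum tends to its value at a
      apply Tendsto.mono_left _ nhdsWithin_le_nhds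
      apply tendsto_finset_sum
      intro k hk
      obtain ⟨hk0, hkM⟩ := Finset.mem_Ioo.mp hk
      have hb : |(2 * (k:ℝ) - M)| ≤ (M : ℝ) - 2 := by
        have h1 : (1:ℝ) ≤ k := by exact_mod_cast hk0
        have h2 : (k:ℝ) ≤ M - 1 := by
          have : (k:ℝ) + 1 ≤ M := by exact_mod_cast hkM
          linarith
        rw [abs_le]; constructor <;> linarith
      have hcosa : 0 < Real.cos (((2 * k : ℝ) - M) * a) := by
        apply Real.cos_pos_of_mem_Ioo
        have h1 : |((2 * (k:ℝ)) - M) * a| ≤ ((M:ℝ) - 2) * a := by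
          rw [abs_mul, abs_of_nonneg ha.le]
          exact mul_le_mul_of_nonneg_right hb ha.le
        have h2 : ((M:ℝ) - 2) * a < (M:ℝ) * a := by nlinarith
        rw [hMa] at h2
        have := abs_lt.mp (lt_of_le_of_lt h1 h2)
        constructor <;> linarith [this.1, this.2]
      apply Tendsto.const_mul
      apply (Real.continuousAt_log (by positivity)).tendsto.comp
      exact (continuous_const.mul (Real.continuous_cos.comp
        (continuous_const.mul continuous_id))).continuousAt.tendsto
    · -- boundary term tends to atBot
      apply Tendsto.const_mul_atBot (by norm_num : (0:ℝ) < 2)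
      apply Real.tendsto_log_nhdsGT_zero.comp
      apply tendsto_nhdsWithin_of_tendsto_nhds_of_eventually_within
      · have : Tendsto (fun W : ℝ => 2 * Real.cos ((M:ℝ) * W)) (nhds a)
            (nhds (2 * Real.cos ((M:ℝ) * a))) :=
          (continuous_const.mul (Real.continuous_cos.comp
            (continuous_const.mul continuous_id))).continuousAt.tendsto
        rw [hMa, Real.cos_pi_div_two, mul_zero] at this
        exact this.mono_left nhdsWithin_le_nhds
      · filter_upwards [hmem] with W hW
        have : 0 < Real.cos ((M:ℝ) * W) :=
          rbm_cos_pos M hM1 (by rw [abs_of_nonneg hM0.le]) hW.1 hW.2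
        simp only [Set.mem_Ioi]
        positivity
  refine ⟨hcont, hzero, htend, ?_⟩
  -- surjectivity onto (-∞, 0]
  intro y hy
  rcases eq_or_lt_of_le (Set.mem_Iic.mp hy) with rfl | hy'
  · exact ⟨0, ⟨le_refl 0, ha⟩, hzero⟩
  · have hne : l.NeBot := by
      apply mem_closure_iff_nhdsWithin_neBot.mp
      rw [closure_Ico ha.ne]
      exact Set.right_mem_Icc.mpr ha.le
    obtain ⟨W₁, hW₁lt, hW₁mem⟩ :=
      ((htend.eventually (eventually_lt_atBot y)).and hmem).exists
    have hsub : Set.Icc (0:ℝ) W₁ ⊆ Set.Ico 0 a := fun x hx =>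
      ⟨hx.1, lt_of_le_of_lt hx.2 hW₁mem.2⟩
    have hIVT := intermediate_value_Icc' hW₁mem.1 (hcont.mono hsub)
    have hy2 : y ∈ Set.Icc (F W₁) (F 0) := ⟨hW₁lt.le, by rw [hzero]; exact hy'.le⟩
    obtain ⟨x, hx, hxy⟩ := hIVT hy2
    exact ⟨x, hsub hx, hxy⟩
end

section
/- For all z ∈ {−1, +1} and all a, w ∈ ℝ: (1/√2)·(z·e^{i(a+w)z} + e^{−i(a+w)z}) = (e^{−iπ/4}/√2)·e^{i(π/4)z}·2·cos((π/4)·z − w − a − π/4). -/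
open Real Complex

/-- Scalar identity encoding the action of the Hadamard gate on one visible
qubit of a unitary L-DBM wave function: for `z ∈ {-1, 1}` and real `a, w`,
`(1/√2)(z e^{i(a+w)z} + e^{-i(a+w)z})
  = (e^{-iπ/4}/√2) e^{i(π/4)z} · 2 cos ((π/4)z - w - a - π/4)`. -/
theorem ldbm_hadamard_action (z : ℝ) (hz : z = -1 ∨ z = 1) (a w : ℝ) :
    (1 / (Real.sqrt 2 : ℂ)) *
        ((z : ℂ) * Complex.exp (Complex.I * ((a : ℂ) + w) * z) +
          Complex.exp (-Complex.I * ((a : ℂ) + w) * z)) =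
      (Complex.exp (-Complex.I * (Real.pi / 4)) / (Real.sqrt 2 : ℂ)) *
        Complex.exp (Complex.I * ((Real.pi : ℂ) / 4) * z) *
        (2 * Complex.cos (((Real.pi : ℂ) / 4) * z - w - a - (Real.pi : ℂ) / 4)) := by
  have h2 : (Real.sqrt 2 : ℂ) ≠ 0 := by
    norm_cast; positivity
  have hE : Complex.exp (Complex.I * (↑Real.pi/4)) ^ 4 = -1 := by
    rw [← Complex.exp_nat_mul, show ((4:ℕ):ℂ) * (Complex.I * (↑Real.pi/4)) = Real.pi * Complex.I by push_cast; ring, Complex.exp_pi_mul_I]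
  set t := Complex.exp (Complex.I * ((a:ℂ) + w)) with ht
  set E := Complex.exp (Complex.I * (↑Real.pi/4)) with hEdef
  clear_value t E
  have htn : t ≠ 0 := by rw [ht]; exact Complex.exp_ne_zero _
  have hEn : E ≠ 0 := by rw [hEdef]; exact Complex.exp_ne_zero _
  rcases hz with h | h <;> subst h <;> push_cast <;> rw [Complex.cos]
  · have e1 : Complex.exp (Complex.I * ((a:ℂ)+w) * (-1)) = t⁻¹ := by
      rw [ht, ← Complex.exp_neg]; congr 1; ring
    have e2 : Complex.exp (-Complex.I * ((a:ℂ)+w) * (-1)) = t := by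
      rw [ht]; congr 1; ring
    have e3 : Complex.exp (Complex.I * ((Real.pi:ℂ)/4) * (-1)) = E⁻¹ := by
      rw [hEdef, ← Complex.exp_neg]; congr 1; ring
    have e4 : Complex.exp ((((Real.pi:ℂ)/4) * (-1) - w - a - (Real.pi:ℂ)/4) * Complex.I) = (t * E^2)⁻¹ := by
      rw [ht, hEdef, sq, ← Complex.exp_add, ← Complex.exp_add, ← Complex.exp_neg]; congr 1; ring
    have e5 : Complex.exp (-(((Real.pi:ℂ)/4) * (-1) - w - a - (Real.pi:ℂ)/4) * Complex.I) = t * E^2 := by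
      rw [ht, hEdef, sq, ← Complex.exp_add, ← Complex.exp_add]; congr 1; ring
    have e6 : Complex.exp (-Complex.I * ((Real.pi:ℂ)/4)) = E⁻¹ := by
      rw [hEdef, ← Complex.exp_neg]; congr 1; ring
    have hEinv : E⁻¹ = -E^3 := inv_eq_of_mul_eq_one_left (by linear_combination -hE)
    rw [mul_inv, ← inv_pow] at e4
    rw [e1, e2, e3, e4, e5, e6, hEinv]
    field_simp
    linear_combination (-(E^8 - E^4 + 1) - t^2*(E^4-1)) * hE
  · have e1 : Complex.exp (Complex.I * ((a:ℂ)+w) * 1) = t := by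
      rw [ht]; congr 1; ring
    have e2 : Complex.exp (-Complex.I * ((a:ℂ)+w) * 1) = t⁻¹ := by
      rw [ht, ← Complex.exp_neg]; congr 1; ring
    have e3 : Complex.exp (Complex.I * ((Real.pi:ℂ)/4) * 1) = E := by
      rw [hEdef]; congr 1; ring
    have e4 : Complex.exp ((((Real.pi:ℂ)/4) * 1 - w - a - (Real.pi:ℂ)/4) * Complex.I) = t⁻¹ := by
      rw [ht, ← Complex.exp_neg]; congr 1; ring
    have e5 : Complex.exp (-(((Real.pi:ℂ)/4) * 1 - w - a - (Real.pi:ℂ)/4) * Complex.I) = t := by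
      rw [ht]; congr 1; ring
    have e6 : Complex.exp (-Complex.I * ((Real.pi:ℂ)/4)) = E⁻¹ := by
      rw [hEdef, ← Complex.exp_neg]; congr 1; ring
    rw [e1, e2, e3, e4, e5, e6]
    field_simp
    ring
end

section
/- Let H be a Hermitian operator on a finite-dimensional complex inner-product space with smallest eigenvalue E₀, and suppose the eigenspace of E₀ is one-dimensional, spanned by a unit vector g. If ψ₀ satisfies ⟨g, ψ₀⟩ ≠ 0, then the normalized imaginary-time-evolved state e^{−τH}ψ₀ / ‖e^{−τH}ψ₀‖ converges, as τ → ∞, to (⟨g,ψ₀⟩/|⟨g,ψ₀⟩|)·g. In particular, ⟨ψ(τ), H ψ(τ)⟩/‖ψ(τ)‖² → E₀, where ψ(τ) = e^{−τH}ψ₀. -/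
open Filter NormedSpace Nat

lemma exp_apply_eigvec {E : Type*} [NormedAddCommGroup E] [InnerProductSpace ℂ E]
    [FiniteDimensional ℂ E] (A : E →L[ℂ] E) (v : E) (c : ℂ) (h : A v = c • v) :
    NormedSpace.exp A v = Complex.exp c • v := by
  have hpow : ∀ n : ℕ, (A ^ n) v = c ^ n • v := by
    intro n
    induction n with
    | zero => simp
    | succ n ih =>
      rw [pow_succ, ContinuousLinearMap.mul_apply, h, map_smul, ih, smul_smul, pow_succ, mul_comm c (c ^ n)]
  have hsum : Summable fun n : ℕ => (n ! : ℂ)⁻¹ • A ^ n := expSeries_summable' (𝕂 := ℂ) A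
  have happ := (ContinuousLinearMap.apply ℂ E v).map_tsum hsum
  rw [exp_eq_tsum (𝕂 := ℂ)]
  calc (∑' n : ℕ, (n ! : ℂ)⁻¹ • A ^ n) v
      = ∑' n : ℕ, ((n ! : ℂ)⁻¹ • A ^ n) v := happ
    _ = ∑' n : ℕ, ((n ! : ℂ)⁻¹ * c ^ n) • v := by
        congr 1; ext n; rw [ContinuousLinearMap.smul_apply, hpow, smul_smul]
    _ = (∑' n : ℕ, (n ! : ℂ)⁻¹ * c ^ n) • v := by
        rw [Summable.tsum_smul_const]
        exact (expSeries_summable' (𝕂 := ℂ) c).congr (fun n => by simp [smul_eq_mul])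
    _ = Complex.exp c • v := by
        rw [Complex.exp_eq_exp_ℂ, exp_eq_tsum (𝕂 := ℂ)]
        simp [smul_eq_mul]

lemma coe_smul'' {E : Type*} [NormedAddCommGroup E] [InnerProductSpace ℂ E]
    (r : ℝ) (x : E) : (r : ℂ) • x = r • x := by
  rw [← smul_one_smul ℂ r x, Complex.real_smul, mul_one]

/-- Imaginary-time-evolution convergence: if `H` is a self-adjoint operator on
a finite-dimensional complex inner-product space, with smallest eigenvalue
`E₀` whose eigenspace is one-dimensional and spanned by a unit vector `g`, and
`⟪g, ψ₀⟫ ≠ 0`, then the normalized state `e^{-τH} ψ₀ / ‖e^{-τH} ψ₀‖` converges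
as `τ → ∞` to `(⟪g,ψ₀⟫/|⟪g,ψ₀⟫|) • g`, and the energy expectation value
converges to `E₀`. -/
theorem imaginary_time_evolution_converges
    {E : Type*} [NormedAddCommGroup E] [InnerProductSpace ℂ E]
    [FiniteDimensional ℂ E]
    (H : E →L[ℂ] E) (hsa : IsSelfAdjoint H)
    (E₀ : ℝ) (g : E) (hg : ‖g‖ = 1)
    (hgeig : H g = (E₀ : ℂ) • g)
    (hmin : ∀ μ : ℂ, Module.End.HasEigenvalue (H : E →ₗ[ℂ] E) μ → (E₀ : ℝ) ≤ μ.re)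
    (hone : Module.End.eigenspace (H : E →ₗ[ℂ] E) (E₀ : ℂ) = Submodule.span ℂ {g})
    (ψ₀ : E) (hover : inner (𝕜 := ℂ) g ψ₀ ≠ 0)
    (ψ : ℝ → E) (hψ : ∀ τ : ℝ, ψ τ = NormedSpace.exp ((-τ : ℂ) • H) ψ₀) :
    Tendsto (fun τ : ℝ => (‖ψ τ‖⁻¹ : ℝ) • ψ τ) atTop
      (nhds ((inner (𝕜 := ℂ) g ψ₀ / (‖inner (𝕜 := ℂ) g ψ₀‖ : ℂ)) • g)) ∧
    Tendsto (fun τ : ℝ => inner (𝕜 := ℂ) (ψ τ) (H (ψ τ)) / ((‖ψ τ‖ : ℂ) ^ 2))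
      atTop (nhds (E₀ : ℂ)) := by
  have hT : (H : E →ₗ[ℂ] E).IsSymmetric := hsa.isSymmetric
  have hn : Module.finrank ℂ E = Module.finrank ℂ E := rfl
  set b := hT.eigenvectorBasis hn with hb
  set μ := hT.eigenvalues hn with hμdef
  set c : Fin (Module.finrank ℂ E) → ℂ := fun i => inner (𝕜 := ℂ) (b i) ψ₀ with hc
  have hbnorm : ∀ i, ‖b i‖ = 1 := fun i => b.orthonormal.1 i
  have hbeig : ∀ i, H (b i) = (μ i : ℂ) • b i := fun i => hT.apply_eigenvectorBasis hn i
  have hgcoe : ∀ i, μ i ≠ E₀ → inner (𝕜 := ℂ) (b i) g = 0 := by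
    intro i hi
    have h1 : inner (𝕜 := ℂ) (b i) (H g) = (E₀ : ℂ) * inner (𝕜 := ℂ) (b i) g := by
      rw [hgeig, inner_smul_right]
    have h2 : inner (𝕜 := ℂ) (b i) (H g) = (μ i : ℂ) * inner (𝕜 := ℂ) (b i) g := by
      have h3 := hT (b i) g
      simp only [ContinuousLinearMap.coe_coe] at h3
      rw [← h3, hbeig i, inner_smul_left, Complex.conj_ofReal]
    have h3 : ((μ i : ℂ) - E₀) * inner (𝕜 := ℂ) (b i) g = 0 := by
      rw [sub_mul, ← h1, ← h2, sub_self]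
    rcases mul_eq_zero.mp h3 with h | h
    · exact absurd (by exact_mod_cast sub_eq_zero.mp h) hi
    · exact h
  have hgne : g ≠ 0 := fun h => by simp [h] at hg
  obtain ⟨i₀, hi₀⟩ : ∃ i, inner (𝕜 := ℂ) (b i) g ≠ 0 := by
    by_contra h
    push_neg at h
    apply hgne
    rw [← b.sum_repr' g]
    simp [h]
  have hμi₀ : μ i₀ = E₀ := by
    by_contra h; exact hi₀ (hgcoe i₀ h)
  have huniq : ∀ i, i ≠ i₀ → μ i ≠ E₀ := by
    intro i hne heq
    have hmem : ∀ j, μ j = E₀ → b j ∈ Submodule.span ℂ {g} := by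
      intro j hj
      rw [← hone, Module.End.mem_eigenspace_iff]
      have := hbeig j
      rw [hj] at this
      exact this
    obtain ⟨z, hz⟩ := Submodule.mem_span_singleton.mp (hmem i heq)
    obtain ⟨w, hw⟩ := Submodule.mem_span_singleton.mp (hmem i₀ hμi₀)
    have horth : inner (𝕜 := ℂ) (b i) (b i₀) = 0 := b.orthonormal.2 hne
    have hzne : z ≠ 0 := by
      intro h
      rw [h, zero_smul] at hz
      exact absurd (hbnorm i) (by rw [← hz]; simp)
    have hwne : w ≠ 0 := by
      intro h
      rw [h, zero_smul] at hw
      exact absurd (hbnorm i₀) (by rw [← hw]; simp)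
    rw [← hz, ← hw, inner_smul_left, inner_smul_right,
      inner_self_eq_norm_sq_to_K, hg] at horth
    simp [hzne, hwne] at horth
  have hgap : ∀ i, i ≠ i₀ → E₀ < μ i := by
    intro i hi
    have h1 := hmin ((μ i : ℝ) : ℂ) (hT.hasEigenvalue_eigenvalues hn i)
    rw [Complex.ofReal_re] at h1
    exact lt_of_le_of_ne h1 (Ne.symm (huniq i hi))
  have hgrepr : g = (inner (𝕜 := ℂ) (b i₀) g) • b i₀ := by
    conv_lhs => rw [← b.sum_repr' g]
    rw [Finset.sum_eq_single i₀]
    · intro j _ hj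
      rw [hgcoe j (huniq j hj), zero_smul]
    · intro h
      exact absurd (Finset.mem_univ i₀) h
  set a : ℂ := inner (𝕜 := ℂ) (b i₀) g with ha
  have hanorm : ‖a‖ = 1 := by
    have := congrArg norm hgrepr
    rw [hg, norm_smul, hbnorm i₀, mul_one] at this
    exact this.symm
  have hψτ : ∀ τ : ℝ, ψ τ = ∑ i, (Complex.exp (-τ * μ i) * c i) • b i := by
    intro τ
    rw [hψ τ]
    conv_lhs => rw [← b.sum_repr' ψ₀]
    rw [map_sum]
    refine Finset.sum_congr rfl fun i _ => ?_
    rw [map_smul, exp_apply_eigvec ((-τ : ℂ) • H) (b i) ((-τ : ℂ) * μ i)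
      (by rw [ContinuousLinearMap.smul_apply, hbeig i, smul_smul]),
      smul_smul, mul_comm]
  have hfτ : ∀ τ : ℝ, (Real.exp (τ * E₀) : ℂ) • ψ τ
      = ∑ i, ((Real.exp (τ * (E₀ - μ i)) : ℂ) * c i) • b i := by
    intro τ
    rw [hψτ τ, Finset.smul_sum]
    refine Finset.sum_congr rfl fun i _ => ?_
    rw [smul_smul]
    congr 1
    rw [← mul_assoc]
    congr 1
    rw [Complex.ofReal_exp, Complex.ofReal_exp, ← Complex.exp_add]
    congr 1
    push_cast
    ring
  set v : E := c i₀ • b i₀ with hv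
  have hlim : Tendsto (fun τ : ℝ => (Real.exp (τ * E₀) : ℂ) • ψ τ) atTop (nhds v) := by
    have hvsum : (∑ i, (if i = i₀ then c i₀ else 0) • b i) = v := by
      rw [Finset.sum_eq_single i₀]
      · simp [hv]
      · intro j _ hj; simp [hj]
      · intro h; exact absurd (Finset.mem_univ i₀) h
    have hlim' : Tendsto (fun τ : ℝ => (Real.exp (τ * E₀) : ℂ) • ψ τ) atTop
        (nhds (∑ i, (if i = i₀ then c i₀ else 0) • b i)) := by
      simp only [hfτ]
      apply tendsto_finset_sum
      intro i _
      by_cases h : i = i₀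
      · subst h
        simp only [if_pos rfl, hμi₀, sub_self, mul_zero, Real.exp_zero,
          Complex.ofReal_one, one_mul]
        exact tendsto_const_nhds
      · simp only [if_neg h, zero_smul]
        have h1 : Tendsto (fun τ : ℝ => Real.exp (τ * (E₀ - μ i))) atTop (nhds 0) := by
          apply Real.tendsto_exp_atBot.comp
          exact Tendsto.atTop_mul_const_of_neg (by linarith [hgap i h]) tendsto_id
        have h2 : Tendsto (fun τ : ℝ => ((Real.exp (τ * (E₀ - μ i)) : ℂ) * c i))
            atTop (nhds 0) := by
          have h3 := (Complex.continuous_ofReal.tendsto 0).comp h1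
          simpa using h3.mul_const (c i)
        simpa using h2.smul_const (b i)
    rw [hvsum] at hlim'
    exact hlim'
  have hbne : b i₀ ≠ 0 := fun h => by simpa [h] using hbnorm i₀
  have hinner_g : inner (𝕜 := ℂ) g ψ₀ = (starRingEnd ℂ) a * c i₀ := by
    conv_lhs => rw [hgrepr]
    rw [inner_smul_left]
  have hc0 : c i₀ ≠ 0 := fun h => hover (by rw [hinner_g, h, mul_zero])
  have hvne : v ≠ 0 := smul_ne_zero hc0 hbne
  have hnormv : ‖v‖ = ‖c i₀‖ := by rw [hv, norm_smul, hbnorm i₀, mul_one]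
  have hcn : (‖c i₀‖ : ℂ) ≠ 0 := by exact_mod_cast norm_ne_zero_iff.mpr hc0
  have haa : (starRingEnd ℂ) a * a = 1 := by
    rw [mul_comm, Complex.mul_conj]
    rw [Complex.normSq_eq_norm_sq, hanorm]
    norm_num
  constructor
  · -- Part 1
    have heq : ∀ τ : ℝ, (‖ψ τ‖⁻¹ : ℝ) • ψ τ
        = ‖(Real.exp (τ * E₀) : ℂ) • ψ τ‖⁻¹ • ((Real.exp (τ * E₀) : ℂ) • ψ τ) := by
      intro τ
      have hr : (0 : ℝ) < Real.exp (τ * E₀) := Real.exp_pos _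
      rw [norm_smul, Complex.norm_real, Real.norm_eq_abs, abs_of_pos hr,
        coe_smul'', smul_smul, mul_inv,
        mul_comm (Real.exp (τ * E₀))⁻¹, mul_assoc, inv_mul_cancel₀ hr.ne', mul_one]
    have h1 : Tendsto (fun τ : ℝ => ‖(Real.exp (τ * E₀) : ℂ) • ψ τ‖⁻¹
        • ((Real.exp (τ * E₀) : ℂ) • ψ τ)) atTop (nhds (‖v‖⁻¹ • v)) :=
      Tendsto.smul (hlim.norm.inv₀ (norm_ne_zero_iff.mpr hvne)) hlim
    have htarget : (inner (𝕜 := ℂ) g ψ₀ / (‖inner (𝕜 := ℂ) g ψ₀‖ : ℂ)) • g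
        = ‖v‖⁻¹ • v := by
      rw [hinner_g, hnormv, hv, ← coe_smul'' (‖c i₀‖⁻¹) (c i₀ • b i₀), smul_smul]
      conv_lhs => rw [hgrepr]
      rw [smul_smul]
      congr 1
      rw [norm_mul, RCLike.norm_conj, hanorm, one_mul,
        div_mul_eq_mul_div, mul_right_comm, haa, one_mul, div_eq_inv_mul]
      push_cast
      ring
    rw [htarget]
    exact Tendsto.congr (fun τ => (heq τ).symm) h1
  · -- Part 2
    have hbb : inner (𝕜 := ℂ) (b i₀) (b i₀) = 1 := by
      rw [inner_self_eq_norm_sq_to_K, hbnorm i₀]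
      norm_num
    have hHv : H v = (E₀ : ℂ) • v := by
      rw [hv, map_smul, hbeig i₀, hμi₀, smul_smul, smul_smul, mul_comm]
    have hinner_v : inner (𝕜 := ℂ) v (H v) = (E₀ : ℂ) * ((‖c i₀‖ : ℂ)) ^ 2 := by
      rw [hHv, inner_smul_right, hv, inner_smul_left, inner_smul_right, hbb, mul_one]
      rw [mul_comm ((starRingEnd ℂ) (c i₀)), Complex.mul_conj,
        Complex.normSq_eq_norm_sq]
      push_cast
      ring
    have hvnorm0 : ((‖v‖ : ℂ)) ^ 2 ≠ 0 :=
      pow_ne_zero 2 (by exact_mod_cast (norm_ne_zero_iff.mpr hvne))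
    have h1 : Tendsto (fun τ : ℝ =>
        inner (𝕜 := ℂ) ((Real.exp (τ * E₀) : ℂ) • ψ τ) (H ((Real.exp (τ * E₀) : ℂ) • ψ τ))
          / ((‖(Real.exp (τ * E₀) : ℂ) • ψ τ‖ : ℂ) ^ 2)) atTop
        (nhds (inner (𝕜 := ℂ) v (H v) / ((‖v‖ : ℂ) ^ 2))) := by
      refine Tendsto.div (hlim.inner ((H.continuous.tendsto v).comp hlim)) ?_ hvnorm0
      exact ((Complex.continuous_ofReal.tendsto _).comp hlim.norm).pow 2
    have heq2 : ∀ τ : ℝ,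
        inner (𝕜 := ℂ) ((Real.exp (τ * E₀) : ℂ) • ψ τ) (H ((Real.exp (τ * E₀) : ℂ) • ψ τ))
          / ((‖(Real.exp (τ * E₀) : ℂ) • ψ τ‖ : ℂ) ^ 2)
        = inner (𝕜 := ℂ) (ψ τ) (H (ψ τ)) / ((‖ψ τ‖ : ℂ) ^ 2) := by
      intro τ
      have hr : (0 : ℝ) < Real.exp (τ * E₀) := Real.exp_pos _
      have hrC : ((Real.exp (τ * E₀) : ℂ)) ^ 2 ≠ 0 :=
        pow_ne_zero 2 (by exact_mod_cast hr.ne')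
      rw [map_smul, inner_smul_left, inner_smul_right, Complex.conj_ofReal,
        norm_smul, Complex.norm_real, Real.norm_eq_abs, abs_of_pos hr,
        Complex.ofReal_mul, mul_pow, ← mul_assoc, ← sq]
      exact mul_div_mul_left _ _ hrC
    have hval : inner (𝕜 := ℂ) v (H v) / ((‖v‖ : ℂ) ^ 2) = (E₀ : ℂ) := by
      rw [hinner_v, hnormv, mul_div_assoc, div_self (pow_ne_zero 2 hcn), mul_one]
    rw [← hval]
    exact Tendsto.congr heq2 h1
end

section
/- Let K ≠ 0 be real, s = sign(K), W = (1/2)·arccos(e^{−2|K|}), A = e^{|K|}/2, and let U = H₁^x H₂^x CX₁₂ CX₂₃ (Hadamards on qubits 1 and 2, then CNOTs with controls 1→2 and 2→3). Then as operators on three qubits: e^{−K σ₁^x σ₂^x σ₃^z} = A · U · ( Σ_{h ∈ {±1}} e^{−iW(σ₃^z + s·1)h} ) · U†, where the sum over h is a sum of two unitary operators acting only on qubit 3 (tensored with identity on qubits 1, 2). -/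
open Matrix Kronecker

private lemma xxz_sum_zmod2 (f : ZMod 2 → ℂ) : ∑ i, f i = f 0 + f 1 := Fin.sum_univ_two f

private def xxzZ : ZMod 2 → ℂ := fun c => if c = 0 then 1 else -1

private lemma xxzZ_add (a b : ZMod 2) : xxzZ (a + b) = xxzZ a * xxzZ b := by
  rcases (by decide : ∀ c : ZMod 2, c = 0 ∨ c = 1) a with rfl | rfl <;>
    rcases (by decide : ∀ c : ZMod 2, c = 0 ∨ c = 1) b with rfl | rfl <;> simp +decide [xxzZ]

private lemma xxz_perm_conj {I : Type*} [Fintype I] [DecidableEq I] (π : I → I)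
    (hπ : Function.Involutive π)
    (P : Matrix I I ℂ) (hP : ∀ p q, P p q = if p = π q then 1 else 0) (d : I → ℂ) :
    P * Matrix.diagonal d * P = Matrix.diagonal (d ∘ π) := by
  ext p r
  rw [Matrix.mul_apply]
  simp only [Matrix.mul_diagonal, hP]
  rw [Finset.sum_eq_single (π r)]
  · rw [hπ r]
    by_cases h : p = r <;> simp [h, Matrix.diagonal_apply]
  · intro q _ hq; simp [hq]
  · simp

private lemma xxz_perm_sq {I : Type*} [Fintype I] [DecidableEq I] (π : I → I)
    (hπ : Function.Involutive π)
    (P : Matrix I I ℂ) (hP : ∀ p q, P p q = if p = π q then 1 else 0) :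
    P * P = 1 := by
  ext p r
  rw [Matrix.mul_apply]
  simp only [hP]
  rw [Finset.sum_eq_single (π r)]
  · rw [hπ r]
    by_cases h : p = r <;> simp [h, Matrix.one_apply]
  · intro q _ hq; simp [hq]
  · simp

private lemma xxz_perm_ct {I : Type*} [Fintype I] [DecidableEq I] (π : I → I)
    (hπ : Function.Involutive π)
    (P : Matrix I I ℂ) (hP : ∀ p q, P p q = if p = π q then 1 else 0) :
    Pᴴ = P := by
  ext p r
  rw [Matrix.conjTranspose_apply, hP, hP]
  by_cases h : r = π p
  · have h' : p = π r := by rw [h, hπ]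
    rw [if_pos h, if_pos h', star_one]
  · have h' : ¬ p = π r := fun hc => h (by rw [hc, hπ])
    rw [if_neg h, if_neg h', star_zero]

private lemma xxz_kron_ct {m n : Type*} (A : Matrix m m ℂ) (B : Matrix n n ℂ) :
    (A ⊗ₖ B)ᴴ = Aᴴ ⊗ₖ Bᴴ := by
  ext p q
  simp [Matrix.conjTranspose_apply]

private lemma xxz_pair_exp (t : ℝ) :
    Complex.exp ((t : ℂ) * Complex.I) + Complex.exp (-((t : ℂ) * Complex.I)) =
      2 * (Real.cos t : ℂ) := by
  rw [← neg_mul, show (-(t : ℂ)) = ((-t : ℝ) : ℂ) by push_cast; ring,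
    Complex.exp_mul_I, Complex.exp_mul_I, ← Complex.ofReal_cos, ← Complex.ofReal_sin,
    ← Complex.ofReal_cos, ← Complex.ofReal_sin, Real.cos_neg, Real.sin_neg]
  push_cast
  ring

/-- The non-diagonal, non-unitary three-body operator `e^{-K σ₁ˣ σ₂ˣ σ₃ᶻ}`
expressed through unitaries: with `s = sign K`, `W = arccos (exp (-2|K|))/2`,
`A = exp |K| / 2`, and `U = H₁ˣ H₂ˣ CX₁₂ CX₂₃`, one has
`e^{-K σ₁ˣσ₂ˣσ₃ᶻ} = A · U (Σ_{h=±1} e^{-i W (σ₃ᶻ + s·1) h}) U†`, where each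
summand is a unitary acting only on qubit 3. -/
theorem xxz_three_body_unitary_decomposition (K : ℝ) (hK : K ≠ 0)
    (s W A : ℝ) (hs : s = Real.sign K)
    (hW : W = Real.arccos (Real.exp (-2 * |K|)) / 2)
    (hA : A = Real.exp |K| / 2)
    (σx σz Hx : Matrix (ZMod 2) (ZMod 2) ℂ)
    (hσx : σx = !![0, 1; 1, 0]) (hσz : σz = !![1, 0; 0, -1])
    (hHx : Hx = ((1 : ℂ) / Real.sqrt 2) • !![1, 1; 1, -1])
    (CX12 CX23 U : Matrix ((ZMod 2 × ZMod 2) × ZMod 2) ((ZMod 2 × ZMod 2) × ZMod 2) ℂ)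
    (hCX12 : ∀ p q : (ZMod 2 × ZMod 2) × ZMod 2,
      CX12 p q = if p.1.1 = q.1.1 ∧ p.1.2 = q.1.1 + q.1.2 ∧ p.2 = q.2 then 1 else 0)
    (hCX23 : ∀ p q : (ZMod 2 × ZMod 2) × ZMod 2,
      CX23 p q = if p.1.1 = q.1.1 ∧ p.1.2 = q.1.2 ∧ p.2 = q.1.2 + q.2 then 1 else 0)
    (hU : U = ((Hx ⊗ₖ Hx) ⊗ₖ (1 : Matrix (ZMod 2) (ZMod 2) ℂ)) * CX12 * CX23) :
    NormedSpace.exp ((-(K : ℂ)) • ((σx ⊗ₖ σx) ⊗ₖ σz)) =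
      (A : ℂ) • (U *
        (∑ h ∈ ({-1, 1} : Finset ℝ),
          NormedSpace.exp ((-(Complex.I * W * h)) •
            ((1 : Matrix (ZMod 2 × ZMod 2) (ZMod 2 × ZMod 2) ℂ) ⊗ₖ
              (σz + (s : ℂ) • (1 : Matrix (ZMod 2) (ZMod 2) ℂ))))) * Uᴴ) := by
  -- 2×2 building blocks
  have h2 : (Real.sqrt 2 : ℂ) ^ 2 = 2 := by
    norm_cast; exact Real.sq_sqrt (by norm_num)
  have hc2 : ∀ c : ZMod 2, c = 0 ∨ c = 1 := by decide
  have hH : Hx 0 0 = 1 / Real.sqrt 2 * 1 ∧ Hx 0 1 = 1 / Real.sqrt 2 * 1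
      ∧ Hx 1 0 = 1 / Real.sqrt 2 * 1 ∧ Hx 1 1 = 1 / Real.sqrt 2 * -1 := by
    subst hHx; exact ⟨rfl, rfl, rfl, rfl⟩
  have hZ : σz 0 0 = 1 ∧ σz 0 1 = 0 ∧ σz 1 0 = 0 ∧ σz 1 1 = -1 := by
    subst hσz; exact ⟨rfl, rfl, rfl, rfl⟩
  have hX : σx 0 0 = 0 ∧ σx 0 1 = 1 ∧ σx 1 0 = 1 ∧ σx 1 1 = 0 := by
    subst hσx; exact ⟨rfl, rfl, rfl, rfl⟩
  have h01 : (0 : ZMod 2) ≠ 1 := by decide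
  have hHH : Hx * Hx = 1 := by
    ext i j
    rcases hc2 i with rfl | rfl <;> rcases hc2 j with rfl | rfl <;>
      simp only [Matrix.mul_apply, xxz_sum_zmod2, hH.1, hH.2.1, hH.2.2.1, hH.2.2.2,
        Matrix.one_apply_eq, Matrix.one_apply_ne h01, Matrix.one_apply_ne h01.symm] <;>
      field_simp <;>
      first | linear_combination (1 : ℂ)*h2 | linear_combination (-1 : ℂ)*h2 | linear_combination (2 : ℂ)*h2 | linear_combination (-2 : ℂ)*h2 | ring
  have hHzH : Hx * σz * Hx = σx := by
    ext i j
    rcases hc2 i with rfl | rfl <;> rcases hc2 j with rfl | rfl <;>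
      simp only [Matrix.mul_apply, xxz_sum_zmod2, hH.1, hH.2.1, hH.2.2.1, hH.2.2.2,
        hZ.1, hZ.2.1, hZ.2.2.1, hZ.2.2.2, hX.1, hX.2.1, hX.2.2.1, hX.2.2.2] <;>
      field_simp <;>
      first | linear_combination (1 : ℂ)*h2 | linear_combination (-1 : ℂ)*h2 | linear_combination (2 : ℂ)*h2 | linear_combination (-2 : ℂ)*h2 | ring
  have hHct : Hxᴴ = Hx := by
    ext i j
    rw [Matrix.conjTranspose_apply]
    rcases hc2 i with rfl | rfl <;> rcases hc2 j with rfl | rfl <;>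
      simp [hH.1, hH.2.1, hH.2.2.1, hH.2.2.2]
  have hσzd : σz = Matrix.diagonal xxzZ := by
    subst hσz
    ext i j
    fin_cases i <;> fin_cases j <;> simp [xxzZ, Matrix.diagonal] <;> rfl
  -- the H-layer
  set Hp : Matrix ((ZMod 2 × ZMod 2) × ZMod 2) ((ZMod 2 × ZMod 2) × ZMod 2) ℂ :=
    (Hx ⊗ₖ Hx) ⊗ₖ (1 : Matrix (ZMod 2) (ZMod 2) ℂ) with hHp
  have hHpHp : Hp * Hp = 1 := by
    rw [hHp, ← Matrix.mul_kronecker_mul, ← Matrix.mul_kronecker_mul, hHH, Matrix.one_mul,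
      Matrix.one_kronecker_one, Matrix.one_kronecker_one]
  have hHpct : Hpᴴ = Hp := by
    rw [hHp, xxz_kron_ct, xxz_kron_ct, hHct, Matrix.conjTranspose_one]
  -- the permutations underlying CX12 and CX23
  set π1 : (ZMod 2 × ZMod 2) × ZMod 2 → (ZMod 2 × ZMod 2) × ZMod 2 :=
    fun p => ((p.1.1, p.1.1 + p.1.2), p.2) with hπ1
  set π2 : (ZMod 2 × ZMod 2) × ZMod 2 → (ZMod 2 × ZMod 2) × ZMod 2 :=
    fun p => ((p.1.1, p.1.2), p.1.2 + p.2) with hπ2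
  have hadd : ∀ a b : ZMod 2, a + (a + b) = b := by decide
  have hπ1inv : Function.Involutive π1 := by
    intro p
    simp only [hπ1, hadd]
  have hπ2inv : Function.Involutive π2 := by
    intro p
    simp only [hπ2, hadd]
  have hP12 : ∀ p q, CX12 p q = if p = π1 q then 1 else 0 := by
    intro p q
    rw [hCX12]
    congr 1
    simp [hπ1, Prod.ext_iff, and_assoc]
  have hP23 : ∀ p q, CX23 p q = if p = π2 q then 1 else 0 := by
    intro p q
    rw [hCX23]
    congr 1
    simp [hπ2, Prod.ext_iff, and_assoc]
  have hC12sq : CX12 * CX12 = 1 := xxz_perm_sq π1 hπ1inv CX12 hP12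
  have hC23sq : CX23 * CX23 = 1 := xxz_perm_sq π2 hπ2inv CX23 hP23
  have hC12ct : CX12ᴴ = CX12 := xxz_perm_ct π1 hπ1inv CX12 hP12
  have hC23ct : CX23ᴴ = CX23 := xxz_perm_ct π2 hπ2inv CX23 hP23
  have hUct : Uᴴ = CX23 * CX12 * Hp := by
    rw [hU, Matrix.conjTranspose_mul, Matrix.conjTranspose_mul, hHpct, hC12ct, hC23ct,
      mul_assoc]
  -- unitarity
  have hUU : U * Uᴴ = 1 := by
    rw [hUct, hU]
    have e : Hp * CX12 * CX23 * (CX23 * CX12 * Hp)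
        = Hp * (CX12 * (CX23 * CX23) * CX12) * Hp := by noncomm_ring
    rw [e, hC23sq, Matrix.mul_one, hC12sq, Matrix.mul_one, hHpHp]
  have hUctU : Uᴴ * U = 1 := by
    rw [hUct, hU]
    have e : CX23 * CX12 * Hp * (Hp * CX12 * CX23)
        = CX23 * (CX12 * (Hp * Hp) * CX12) * CX23 := by noncomm_ring
    rw [e, hHpHp, Matrix.mul_one, hC12sq, Matrix.mul_one, hC23sq]
  have hUnit : IsUnit U := ⟨⟨U, Uᴴ, hUU, hUctU⟩, rfl⟩
  have hUinv : U⁻¹ = Uᴴ := Matrix.inv_eq_right_inv hUU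
  -- diagonalization of the three-body operator
  have hM1 : Hp * Matrix.diagonal
      (fun p : (ZMod 2 × ZMod 2) × ZMod 2 => xxzZ p.1.1 * xxzZ p.1.2 * xxzZ p.2) * Hp
      = (σx ⊗ₖ σx) ⊗ₖ σz := by
    have hd : Matrix.diagonal
        (fun p : (ZMod 2 × ZMod 2) × ZMod 2 => xxzZ p.1.1 * xxzZ p.1.2 * xxzZ p.2)
        = (σz ⊗ₖ σz) ⊗ₖ σz := by
      rw [hσzd, Matrix.diagonal_kronecker_diagonal, Matrix.diagonal_kronecker_diagonal]
    rw [hd, hHp, ← Matrix.mul_kronecker_mul, ← Matrix.mul_kronecker_mul,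
      ← Matrix.mul_kronecker_mul, ← Matrix.mul_kronecker_mul, hHzH, Matrix.one_mul,
      Matrix.mul_one]
  have hcomp1 : ((fun p : (ZMod 2 × ZMod 2) × ZMod 2 => xxzZ p.2) ∘ π2) ∘ π1
      = fun p : (ZMod 2 × ZMod 2) × ZMod 2 => xxzZ p.1.1 * xxzZ p.1.2 * xxzZ p.2 := by
    funext p
    simp only [Function.comp_apply, hπ1, hπ2]
    rw [xxzZ_add, xxzZ_add]
  have hMdiag : (σx ⊗ₖ σx) ⊗ₖ σz
      = U * Matrix.diagonal (fun p : (ZMod 2 × ZMod 2) × ZMod 2 => xxzZ p.2) * Uᴴ := by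
    rw [hUct, hU]
    have e : Hp * CX12 * CX23
          * Matrix.diagonal (fun p : (ZMod 2 × ZMod 2) × ZMod 2 => xxzZ p.2)
          * (CX23 * CX12 * Hp)
        = Hp * (CX12 * (CX23
            * Matrix.diagonal (fun p : (ZMod 2 × ZMod 2) × ZMod 2 => xxzZ p.2) * CX23)
          * CX12) * Hp := by noncomm_ring
    rw [e, xxz_perm_conj π2 hπ2inv CX23 hP23, xxz_perm_conj π1 hπ1inv CX12 hP12, hcomp1, hM1]
  -- exponentials of diagonal matrices
  have hdexp : ∀ v : ((ZMod 2 × ZMod 2) × ZMod 2) → ℂ,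
      NormedSpace.exp (Matrix.diagonal v)
        = Matrix.diagonal (fun p => Complex.exp (v p)) := by
    intro v
    rw [Matrix.exp_diagonal, Pi.exp_def, ← Complex.exp_eq_exp_ℂ]
  -- LHS via conjugation
  have e1 : (-(K : ℂ)) • ((σx ⊗ₖ σx) ⊗ₖ σz)
      = U * Matrix.diagonal
          (fun p : (ZMod 2 × ZMod 2) × ZMod 2 => (-(K : ℂ)) * xxzZ p.2) * U⁻¹ := by
    rw [hUinv, hMdiag,
      show (fun p : (ZMod 2 × ZMod 2) × ZMod 2 => (-(K : ℂ)) * xxzZ p.2)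
        = (-(K : ℂ)) • (fun p : (ZMod 2 × ZMod 2) × ZMod 2 => xxzZ p.2) from rfl,
      Matrix.diagonal_smul, mul_smul_comm, smul_mul_assoc]
  have hLHS : NormedSpace.exp ((-(K : ℂ)) • ((σx ⊗ₖ σx) ⊗ₖ σz))
      = U * Matrix.diagonal
          (fun p : (ZMod 2 × ZMod 2) × ZMod 2 => Complex.exp (-(K : ℂ) * xxzZ p.2)) * Uᴴ := by
    rw [e1, Matrix.exp_conj U _ hUnit, hdexp, hUinv]
  -- each summand on the RHS
  have hone : σz + (s : ℂ) • (1 : Matrix (ZMod 2) (ZMod 2) ℂ)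
      = Matrix.diagonal (fun c => xxzZ c + (s : ℂ)) := by
    rw [hσzd]
    ext i j
    by_cases h : i = j <;> simp [Matrix.diagonal_apply, Matrix.one_apply, h]
  have hkron : (1 : Matrix (ZMod 2 × ZMod 2) (ZMod 2 × ZMod 2) ℂ)
        ⊗ₖ Matrix.diagonal (fun c => xxzZ c + (s : ℂ))
      = Matrix.diagonal (fun p : (ZMod 2 × ZMod 2) × ZMod 2 => xxzZ p.2 + (s : ℂ)) := by
    rw [← Matrix.diagonal_one, Matrix.diagonal_kronecker_diagonal]
    congr 1
    funext p
    simp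
  have hterm : ∀ h : ℝ,
      NormedSpace.exp ((-(Complex.I * W * h)) •
          ((1 : Matrix (ZMod 2 × ZMod 2) (ZMod 2 × ZMod 2) ℂ) ⊗ₖ
            (σz + (s : ℂ) • (1 : Matrix (ZMod 2) (ZMod 2) ℂ))))
        = Matrix.diagonal (fun p : (ZMod 2 × ZMod 2) × ZMod 2 =>
            Complex.exp ((-(Complex.I * W * h)) * (xxzZ p.2 + (s : ℂ)))) := by
    intro h
    rw [hone, hkron,
      show (-(Complex.I * W * h)) • Matrix.diagonal
          (fun p : (ZMod 2 × ZMod 2) × ZMod 2 => xxzZ p.2 + (s : ℂ))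
        = Matrix.diagonal (fun p : (ZMod 2 × ZMod 2) × ZMod 2 =>
            (-(Complex.I * W * h)) * (xxzZ p.2 + (s : ℂ))) from by
          rw [← Matrix.diagonal_smul]; rfl,
      hdexp]
  -- real scalar facts
  have hcos2W : Real.cos (2 * W) = Real.exp (-2 * |K|) := by
    rw [hW, show 2 * (Real.arccos (Real.exp (-2 * |K|)) / 2)
      = Real.arccos (Real.exp (-2 * |K|)) by ring]
    refine Real.cos_arccos (by linarith [Real.exp_pos (-2 * |K|)]) ?_
    rw [← Real.exp_zero]
    exact Real.exp_le_exp.mpr (by linarith [abs_nonneg K])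
  have keys : A * (2 * Real.cos (W * (1 + s))) = Real.exp (-K)
      ∧ A * (2 * Real.cos (W * (-1 + s))) = Real.exp K := by
    rcases lt_or_gt_of_ne hK with hneg | hpos
    · have hs' : s = -1 := by rw [hs, Real.sign_of_neg hneg]
      have habs : |K| = -K := abs_of_neg hneg
      constructor
      · rw [hs', show W * (1 + -1) = 0 by ring, Real.cos_zero, hA, habs]; ring
      · rw [hs', show W * (-1 + -1) = -(2 * W) by ring, Real.cos_neg, hcos2W, hA, habs,
          show Real.exp (-K) / 2 * (2 * Real.exp (-2 * -K))
            = Real.exp (-K) * Real.exp (-2 * -K) by ring, ← Real.exp_add]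
        congr 1; ring
    · have hs' : s = 1 := by rw [hs, Real.sign_of_pos hpos]
      have habs : |K| = K := abs_of_pos hpos
      constructor
      · rw [hs', show W * (1 + 1) = 2 * W by ring, hcos2W, hA, habs,
          show Real.exp K / 2 * (2 * Real.exp (-2 * K))
            = Real.exp K * Real.exp (-2 * K) by ring, ← Real.exp_add]
        congr 1; ring
      · rw [hs', show W * (-1 + 1) = 0 by ring, Real.cos_zero, hA, habs]; ring
  have hz0 : xxzZ 0 = 1 := by norm_num [xxzZ]
  have hz1 : xxzZ 1 = -1 := by norm_num [xxzZ]
  have hfun : ∀ c : ZMod 2,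
      (A : ℂ) * (Complex.exp (-(Complex.I * W * ((-1 : ℝ) : ℂ)) * (xxzZ c + (s : ℂ)))
        + Complex.exp (-(Complex.I * W * ((1 : ℝ) : ℂ)) * (xxzZ c + (s : ℂ))))
      = Complex.exp (-(K : ℂ) * xxzZ c) := by
    intro c
    have hc : c = 0 ∨ c = 1 := by revert c; decide
    rcases hc with hc | hc <;> subst hc
    · rw [hz0,
        show -(Complex.I * W * ((-1 : ℝ) : ℂ)) * ((1 : ℂ) + (s : ℂ))
          = ((W * (1 + s) : ℝ) : ℂ) * Complex.I by push_cast; ring,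
        show -(Complex.I * W * ((1 : ℝ) : ℂ)) * ((1 : ℂ) + (s : ℂ))
          = -(((W * (1 + s) : ℝ) : ℂ) * Complex.I) by push_cast; ring,
        xxz_pair_exp,
        show -(K : ℂ) * 1 = ((-K : ℝ) : ℂ) by push_cast; ring,
        ← Complex.ofReal_exp]
      exact_mod_cast keys.1
    · rw [hz1,
        show -(Complex.I * W * ((-1 : ℝ) : ℂ)) * ((-1 : ℂ) + (s : ℂ))
          = ((W * (-1 + s) : ℝ) : ℂ) * Complex.I by push_cast; ring,
        show -(Complex.I * W * ((1 : ℝ) : ℂ)) * ((-1 : ℂ) + (s : ℂ))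
          = -(((W * (-1 + s) : ℝ) : ℂ) * Complex.I) by push_cast; ring,
        xxz_pair_exp,
        show -(K : ℂ) * (-1) = ((K : ℝ) : ℂ) by push_cast; ring,
        ← Complex.ofReal_exp]
      exact_mod_cast keys.2
  -- assemble
  rw [hLHS, Finset.sum_pair (by norm_num : (-1 : ℝ) ≠ 1), hterm (-1), hterm 1,
    Matrix.diagonal_add]
  have hdd : Matrix.diagonal
      (fun p : (ZMod 2 × ZMod 2) × ZMod 2 => Complex.exp (-(K : ℂ) * xxzZ p.2))
      = (A : ℂ) • Matrix.diagonal (fun p : (ZMod 2 × ZMod 2) × ZMod 2 =>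
          Complex.exp (-(Complex.I * W * ((-1 : ℝ) : ℂ)) * (xxzZ p.2 + (s : ℂ)))
          + Complex.exp (-(Complex.I * W * ((1 : ℝ) : ℂ)) * (xxzZ p.2 + (s : ℂ)))) := by
    have hF : (fun p : (ZMod 2 × ZMod 2) × ZMod 2 => Complex.exp (-(K : ℂ) * xxzZ p.2))
        = (A : ℂ) • (fun p : (ZMod 2 × ZMod 2) × ZMod 2 =>
            Complex.exp (-(Complex.I * W * ((-1 : ℝ) : ℂ)) * (xxzZ p.2 + (s : ℂ)))
            + Complex.exp (-(Complex.I * W * ((1 : ℝ) : ℂ)) * (xxzZ p.2 + (s : ℂ)))) := by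
      funext p
      rw [Pi.smul_apply, smul_eq_mul]
      exact (hfun p.2).symm
    rw [hF, Matrix.diagonal_smul]
  rw [hdd, mul_smul_comm, smul_mul_assoc]
end
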